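/- arXiv:2005.02923 — 2 statements merged into one kernel-verified Lean document; each statement's English description precedes it below -/
import Mathlib

section
/- Let d ≥ 2 be an integer. There exists a constant C > 0, depending only on d, such that the following holds. Let α₁, …, α_d ∈ ℂ, let L be the lattice L = {(n₁,…,n_d) ∈ ℤ^d : α₁n₁ + … + α_d n_d = 0}, let H₁,…,H_d be positive integers, let D = {(x₁,…,x_d) ∈ ℝ^d : |x_i| ≤ H_i for all i}, and set H = max_{1≤i≤d} H_i. If L ∩ D contains d−1 linearly independent points (over ℝ) and α_ℓ ≠ 0 for some 1 ≤ ℓ ≤ d, then there exists an index 1 ≤ j ≤ d with α_j ≠ 0 such that for each i = 1,…,d there exist integers a_i and b_i with α_i/α_j = a_i/b_i, gcd(a_i,b_i) = 1, b_i ≠ 0, and |a_i|, |b_i| ≤ C·H^d. -/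
open Matrix

/-- Square matrix whose first `n` rows are `v` and last row is `x`. -/
def rowMat {R : Type*} [CommRing R] {n : ℕ} (v : Fin n → Fin (n + 1) → R)
    (x : Fin (n + 1) → R) : Matrix (Fin (n + 1)) (Fin (n + 1)) R :=
  Matrix.of (Fin.lastCases x v)

@[simp] lemma rowMat_apply_castSucc {R : Type*} [CommRing R] {n : ℕ}
    (v : Fin n → Fin (n + 1) → R) (x : Fin (n + 1) → R) (k : Fin n) :
    rowMat v x (Fin.castSucc k) = v k := by
  show Fin.lastCases x v (Fin.castSucc k) = v k
  rw [Fin.lastCases_castSucc]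

@[simp] lemma rowMat_apply_last {R : Type*} [CommRing R] {n : ℕ}
    (v : Fin n → Fin (n + 1) → R) (x : Fin (n + 1) → R) :
    rowMat v x (Fin.last n) = x := by
  show Fin.lastCases x v (Fin.last n) = x
  rw [Fin.lastCases_last]

lemma rowMat_eq_updateRow {R : Type*} [CommRing R] {n : ℕ} (v : Fin n → Fin (n + 1) → R)
    (x y : Fin (n + 1) → R) :
    rowMat v x = (rowMat v y).updateRow (Fin.last n) x := by
  ext r c
  refine Fin.lastCases ?_ (fun k => ?_) r
  · simp [Matrix.updateRow_self]
  · rw [Matrix.updateRow_ne (Fin.castSucc_lt_last k).ne]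
    simp

lemma rowMat_expand {R : Type*} [CommRing R] {n : ℕ} (v : Fin n → Fin (n + 1) → R)
    (x : Fin (n + 1) → R) :
    (rowMat v x).det = ∑ j, x j * (rowMat v (Pi.single j 1)).det := by
  have key : ∀ s : Finset (Fin (n + 1)),
      (rowMat v (∑ j ∈ s, x j • (Pi.single j 1 : Fin (n + 1) → R))).det
        = ∑ j ∈ s, x j * (rowMat v (Pi.single j 1)).det := by
    intro s
    induction s using Finset.induction_on with
    | empty =>
        simp only [Finset.sum_empty]
        exact Matrix.det_eq_zero_of_row_eq_zero (Fin.last n) (by simp)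
    | @insert a s ha ih =>
        rw [Finset.sum_insert ha, Finset.sum_insert ha, ← ih]
        rw [rowMat_eq_updateRow v _ 0, rowMat_eq_updateRow v (∑ j ∈ s, _) 0,
          rowMat_eq_updateRow v (Pi.single a 1) 0]
        rw [Matrix.det_updateRow_add, Matrix.det_updateRow_smul]
  have hx : x = ∑ j, x j • (Pi.single j 1 : Fin (n + 1) → R) := by
    ext i
    simp [Pi.single_apply]
  calc (rowMat v x).det = (rowMat v (∑ j, x j • (Pi.single j 1 : Fin (n + 1) → R))).det := by
        rw [← hx]
    _ = _ := key Finset.univ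

lemma rowMat_map {R S : Type*} [CommRing R] [CommRing S] {n : ℕ} (f : R →+* S)
    (v : Fin n → Fin (n + 1) → R) (x : Fin (n + 1) → R) :
    (rowMat v x).map f = rowMat (fun k i => f (v k i)) (fun i => f (x i)) := by
  ext r c
  refine Fin.lastCases ?_ (fun k => ?_) r <;> simp

lemma rowMat_det_cast {R S : Type*} [CommRing R] [CommRing S] {n : ℕ} (f : R →+* S)
    (v : Fin n → Fin (n + 1) → R) (x : Fin (n + 1) → R) :
    f (rowMat v x).det = (rowMat (fun k i => f (v k i)) (fun i => f (x i))).det := by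
  rw [RingHom.map_det, RingHom.mapMatrix_apply, rowMat_map]

lemma rowMat_det_intCast {S : Type*} [CommRing S] {n : ℕ} (v : Fin n → Fin (n + 1) → ℤ)
    (x : Fin (n + 1) → ℤ) :
    ((rowMat v x).det : S)
      = (rowMat (fun k i => ((v k i : S))) (fun i => ((x i : S)))).det :=
  rowMat_det_cast (Int.castRingHom S) v x

lemma intCast_single {S : Type*} [CommRing S] {n : ℕ} (j : Fin (n + 1)) :
    (fun i => (((Pi.single j 1 : Fin (n + 1) → ℤ) i : S))) = (Pi.single j 1 : Fin (n + 1) → S) := by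
  funext i
  simp [Pi.single_apply]

/-- Let `d ≥ 2`. There is a constant `C > 0` depending only on `d` such
that for any `α₁,…,α_d ∈ ℂ` and positive integers `H₁,…,H_d` with `H = max Hᵢ`: if the
lattice `L = {n ∈ ℤ^d : ∑ αᵢnᵢ = 0}` intersected with the box `|xᵢ| ≤ Hᵢ` contains `d−1`
points that are linearly independent over `ℝ`, and some `α_ℓ ≠ 0`, then there is an index
`j` with `α_j ≠ 0` such that for each `i` there are integers `aᵢ, bᵢ` with
`αᵢ/α_j = aᵢ/bᵢ`, `gcd(aᵢ,bᵢ) = 1`, `bᵢ ≠ 0` and `|aᵢ|, |bᵢ| ≤ C·H^d`. -/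
theorem stmt_12 (d : ℕ) (hd : 2 ≤ d) :
    ∃ C : ℝ, 0 < C ∧
      ∀ (α : Fin d → ℂ) (Hv : Fin d → ℕ), (∀ i, 0 < Hv i) →
        (∃ v : Fin (d - 1) → (Fin d → ℤ),
            (∀ k, (∑ i, α i * (v k i : ℂ)) = 0 ∧ ∀ i, |v k i| ≤ (Hv i : ℤ)) ∧
            LinearIndependent ℝ (fun k => fun i => ((v k i : ℝ)))) →
        (∃ ℓ, α ℓ ≠ 0) →
        ∃ j, α j ≠ 0 ∧
          ∀ i, ∃ a b : ℤ, b ≠ 0 ∧ Int.gcd a b = 1 ∧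
            α i / α j = (a : ℂ) / (b : ℂ) ∧
            (|a| : ℝ) ≤ C * ((Finset.univ.sup Hv : ℕ) : ℝ) ^ d ∧
            (|b| : ℝ) ≤ C * ((Finset.univ.sup Hv : ℕ) : ℝ) ^ d := by
  obtain ⟨n, rfl⟩ : ∃ n, d = n + 1 := ⟨d - 1, by omega⟩
  refine ⟨(Nat.factorial (n + 1) : ℝ), by positivity, ?_⟩
  intro α Hv hHv hex hα
  obtain ⟨v, hvk, hli⟩ := hex
  obtain ⟨ℓ, hℓ⟩ := hα
  set H : ℕ := Finset.univ.sup Hv with hHdef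
  have hH1 : 1 ≤ H := le_trans (hHv 0) (Finset.le_sup (Finset.mem_univ (0 : Fin (n + 1))))
  -- integer cofactor vector
  set w : Fin (n + 1) → ℤ := fun j => (rowMat v (Pi.single j 1)).det with hwdef
  -- real and complex versions of the rows
  set vR : Fin n → Fin (n + 1) → ℝ := fun k i => ((v k i : ℝ)) with hvR
  set vC : Fin n → Fin (n + 1) → ℂ := fun k i => ((v k i : ℂ)) with hvC
  -- bound on w
  have hwbound : ∀ j, |w j| ≤ (Nat.factorial (n + 1) : ℤ) * (H : ℤ) ^ (n + 1) := by
    intro j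
    have hentries : ∀ r c, |rowMat v (Pi.single j 1) r c| ≤ (H : ℤ) := by
      intro r c
      refine Fin.lastCases ?_ (fun k => ?_) r
      · rw [rowMat_apply_last]
        rcases eq_or_ne c j with h | h
        · subst h
          rw [Pi.single_eq_same]
          simpa using (show (1 : ℤ) ≤ (H : ℤ) by exact_mod_cast hH1)
        · rw [Pi.single_eq_of_ne h]
          simp
      · rw [rowMat_apply_castSucc]
        refine le_trans ((hvk k).2 c) ?_
        exact_mod_cast Finset.le_sup (Finset.mem_univ c)
    have := Matrix.det_le (abv := (AbsoluteValue.abs : AbsoluteValue ℤ ℤ)) (x := (H : ℤ)) hentries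
    simpa [Fintype.card_fin, nsmul_eq_mul] using this
  -- the linear relation ∑ v k i * w i = 0
  have hwv : ∀ k, (∑ i, v k i * w i) = 0 := by
    intro k
    have h1 : (rowMat v (v k)).det = ∑ i, v k i * w i := rowMat_expand v (v k)
    have h2 : (rowMat v (v k)).det = 0 := by
      refine Matrix.det_zero_of_row_eq (i := Fin.castSucc k) (j := Fin.last n)
        (Fin.castSucc_lt_last k).ne ?_
      simp
    rw [← h1, h2]
  -- existence of j with w j ≠ 0
  have hwne : ∃ j, w j ≠ 0 := by
    by_contra hcon
    push_neg at hcon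
    have hdetR : ∀ x : Fin (n + 1) → ℝ, (rowMat vR x).det = 0 := by
      intro x
      rw [rowMat_expand]
      have hdj : ∀ j : Fin (n + 1), (rowMat vR (Pi.single j 1)).det = 0 := by
        intro j
        have h := rowMat_det_intCast (S := ℝ) v (Pi.single j 1)
        rw [intCast_single] at h
        have h2 : (rowMat vR (Pi.single j 1)).det = ((w j : ℤ) : ℝ) := h.symm
        rw [h2, hcon j, Int.cast_zero]
      simp [hdj]
    -- pick x outside the span of vR
    have hspan : Submodule.span ℝ (Set.range vR) ≠ ⊤ := by
      intro htop
      have h1 : Module.finrank ℝ (Submodule.span ℝ (Set.range vR)) ≤ Fintype.card (Fin n) :=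
        finrank_range_le_card vR
      rw [htop] at h1
      simp [finrank_top, Module.finrank_pi] at h1
    obtain ⟨x, hx⟩ : ∃ x, x ∉ Submodule.span ℝ (Set.range vR) := by
      by_contra hcon2
      push_neg at hcon2
      exact hspan (Submodule.eq_top_iff'.mpr hcon2)
    have hrows : (fun r => rowMat vR x r) = Fin.snoc vR x := by
      funext r
      refine Fin.lastCases ?_ (fun k => ?_) r <;> simp
    have hind : LinearIndependent ℝ (fun r => rowMat vR x r) := by
      rw [hrows]
      exact linearIndependent_fin_snoc.mpr ⟨hli, hx⟩
    have hunit : IsUnit (rowMat vR x) := Matrix.linearIndependent_rows_iff_isUnit.mp hind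
    have hdetne : (rowMat vR x).det ≠ 0 :=
      (Matrix.isUnit_iff_isUnit_det _ |>.mp hunit).ne_zero
    exact hdetne (hdetR x)
  obtain ⟨j, hwj⟩ := hwne
  -- proportionality over ℂ
  have hdetC : (rowMat vC (Pi.single j 1)).det = ((w j : ℤ) : ℂ) := by
    have h := rowMat_det_intCast (S := ℂ) v (Pi.single j 1)
    rw [intCast_single] at h
    exact h.symm
  have hdetCne : (rowMat vC (Pi.single j 1)).det ≠ 0 := by
    rw [hdetC]
    exact_mod_cast hwj
  set β : Fin (n + 1) → ℂ := fun i => (w j : ℂ) * α i - α j * (w i : ℂ) with hβ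
  have hker : (rowMat vC (Pi.single j 1)).mulVec β = 0 := by
    funext r
    refine Fin.lastCases ?_ (fun k => ?_) r
    · simp only [Matrix.mulVec, dotProduct, rowMat_apply_last, Pi.zero_apply]
      rw [Finset.sum_eq_single j]
      · simp [hβ, mul_comm]
      · intro b _ hb
        simp [Pi.single_apply, hb.symm, (Ne.symm hb)]
      · intro h
        exact absurd (Finset.mem_univ j) h
    · simp only [Matrix.mulVec, dotProduct, rowMat_apply_castSucc, Pi.zero_apply]
      have hαk : (∑ i, α i * (v k i : ℂ)) = 0 := (hvk k).1
      have hwk : (∑ i, (v k i : ℂ) * (w i : ℂ)) = 0 := by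
        have h := hwv k
        exact_mod_cast congrArg (Int.cast : ℤ → ℂ) h
      calc (∑ i, vC k i * β i)
          = (w j : ℂ) * (∑ i, α i * (v k i : ℂ)) - α j * (∑ i, (v k i : ℂ) * (w i : ℂ)) := by
            rw [Finset.mul_sum, Finset.mul_sum, ← Finset.sum_sub_distrib]
            refine Finset.sum_congr rfl fun i _ => ?_
            simp [hβ, hvC]
            ring
        _ = 0 := by rw [hαk, hwk]; ring
  have hβ0 : β = 0 := by
    have hu : IsUnit (rowMat vC (Pi.single j 1)).det := isUnit_iff_ne_zero.mpr hdetCne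
    have hinv := Matrix.nonsing_inv_mul _ hu
    calc β = (1 : Matrix (Fin (n+1)) (Fin (n+1)) ℂ).mulVec β := (Matrix.one_mulVec β).symm
      _ = ((rowMat vC (Pi.single j 1))⁻¹ * rowMat vC (Pi.single j 1)).mulVec β := by rw [hinv]
      _ = (rowMat vC (Pi.single j 1))⁻¹.mulVec ((rowMat vC (Pi.single j 1)).mulVec β) := by
            rw [Matrix.mulVec_mulVec]
      _ = 0 := by rw [hker, Matrix.mulVec_zero]
  have hprop : ∀ i, (w j : ℂ) * α i = α j * (w i : ℂ) := by
    intro i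
    have := congrFun hβ0 i
    simpa [hβ, sub_eq_zero] using this
  have hαj : α j ≠ 0 := by
    intro h0
    have := hprop ℓ
    rw [h0, zero_mul] at this
    exact hℓ (by
      rcases mul_eq_zero.mp this with h | h
      · exact absurd (by exact_mod_cast h) hwj
      · exact h)
  refine ⟨j, hαj, fun i => ?_⟩
  -- reduce the fraction w i / w j
  set g : ℤ := (Int.gcd (w i) (w j) : ℤ) with hg
  have hgpos : 0 < Int.gcd (w i) (w j) := Int.gcd_pos_of_ne_zero_right _ hwj
  have hgz : g ≠ 0 := by
    simp only [hg]
    exact_mod_cast hgpos.ne'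
  refine ⟨w i / g, w j / g, ?_, ?_, ?_, ?_, ?_⟩
  · intro h0
    have : (w j / g) * g = w j := Int.ediv_mul_cancel (Int.gcd_dvd_right (w i) (w j))
    rw [h0, zero_mul] at this
    exact hwj this.symm
  · exact Int.gcd_div_gcd_div_gcd hgpos
  · -- α i / α j = (w i / g) / (w j / g)
    have ha : ((w i / g : ℤ) : ℂ) * (g : ℂ) = (w i : ℂ) := by
      exact_mod_cast congrArg (Int.cast : ℤ → ℂ) (Int.ediv_mul_cancel (Int.gcd_dvd_left (w i) (w j)))
    have hb : ((w j / g : ℤ) : ℂ) * (g : ℂ) = (w j : ℂ) := by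
      exact_mod_cast congrArg (Int.cast : ℤ → ℂ) (Int.ediv_mul_cancel (Int.gcd_dvd_right (w i) (w j)))
    have hwjC : ((w j : ℤ) : ℂ) ≠ 0 := by exact_mod_cast hwj
    have hbC : ((w j / g : ℤ) : ℂ) ≠ 0 := by
      intro h0
      rw [h0, zero_mul] at hb
      exact hwjC hb.symm
    have hgC : ((g : ℤ) : ℂ) ≠ 0 := by exact_mod_cast hgz
    rw [div_eq_div_iff hαj hbC]
    have key : α i * (w j : ℂ) = (w i : ℂ) * α j := by
      have h := hprop i
      linear_combination h
    have hcancel : (α i * ((w j / g : ℤ) : ℂ)) * ((g : ℤ) : ℂ)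
        = (((w i / g : ℤ) : ℂ) * α j) * ((g : ℤ) : ℂ) := by
      calc (α i * ((w j / g : ℤ) : ℂ)) * ((g : ℤ) : ℂ)
          = α i * (((w j / g : ℤ) : ℂ) * ((g : ℤ) : ℂ)) := by ring
        _ = α i * ((w j : ℤ) : ℂ) := by rw [hb]
        _ = ((w i : ℤ) : ℂ) * α j := key
        _ = (((w i / g : ℤ) : ℂ) * ((g : ℤ) : ℂ)) * α j := by rw [ha]
        _ = (((w i / g : ℤ) : ℂ) * α j) * ((g : ℤ) : ℂ) := by ring
    exact mul_right_cancel₀ hgC hcancel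
  · have h1 : |w i / g| ≤ ((n + 1).factorial : ℤ) * (H : ℤ) ^ (n + 1) :=
      le_trans (Int.abs_ediv_le_abs _ _) (hwbound i)
    exact_mod_cast h1
  · have h1 : |w j / g| ≤ ((n + 1).factorial : ℤ) * (H : ℤ) ^ (n + 1) :=
      le_trans (Int.abs_ediv_le_abs _ _) (hwbound j)
    exact_mod_cast h1
end

section
/- Let d, e be positive integers and let ε > 0. There exist a constant c > 0 and an integer H₀ such that for every integer H ≥ H₀ and every prime p with H^d < p ≤ H^{d+e−ε} the following holds: defining, in F_p, α_i = (2H+1)^{i−1} for i = 1,…,d and β_j = (2H+1)^{j−1} for j = 1,…,e, there exists a nonzero λ₀ ∈ F_p such that the number of integer tuples (h₁,…,h_d, j₁,…,j_e) with |h_i| ≤ H for all i and |j_k| ≤ H for all k, satisfying (α₁h₁ + … + α_d h_d)·(β₁j₁ + … + β_e j_e) = λ₀ in F_p, is at least c·H^ε. -/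
open Finset

/-- digits uniqueness: if all |a i| ≤ 2H and ∑ a i B^i = 0 with B = 2H+1, then a = 0. -/
lemma digit_zero (H : ℕ) : ∀ (n : ℕ) (a : Fin n → ℤ), (∀ i, |a i| ≤ 2*H) →
    (∑ i, a i * (2*(H:ℤ)+1)^(i:ℕ)) = 0 → ∀ i, a i = 0 := by
  intro n
  induction n with
  | zero => intro a _ _ i; exact absurd i.2 (by simp)
  | succ n ih =>
    intro a ha hsum i
    set B : ℤ := 2*(H:ℤ)+1 with hB
    have hexp : (∑ i, a i * B^(i:ℕ)) = a 0 + B * ∑ j : Fin n, a j.succ * B^(j:ℕ) := by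
      rw [Fin.sum_univ_succ, Finset.mul_sum]
      simp only [Fin.val_zero, pow_zero, mul_one, Fin.val_succ, pow_succ]
      congr 1
      apply Finset.sum_congr rfl
      intro j _
      ring
    have h0 : a 0 = 0 := by
      have hdvd : B ∣ a 0 := by
        refine ⟨-(∑ j : Fin n, a j.succ * B^(j:ℕ)), ?_⟩
        have := hsum
        rw [hexp] at this
        linarith
      have : |a 0| < B := by
        have := ha 0
        have : |a 0| ≤ 2*(H:ℤ) := ha 0
        omega
      exact Int.eq_zero_of_abs_lt_dvd hdvd this
    have hrest : (∑ j : Fin n, a j.succ * B^(j:ℕ)) = 0 := by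
      rw [hexp, h0] at hsum
      have hBne : B ≠ 0 := by positivity
      have := hsum
      simp at this
      rcases this with h | h
      · exact absurd h hBne
      · exact h
    have := ih (fun j => a j.succ) (fun j => ha j.succ) hrest
    rcases Fin.eq_zero_or_eq_succ i with h | ⟨j, rfl⟩
    · rw [h]; exact h0
    · exact this j

lemma sum_abs_bound (H : ℕ) (n : ℕ) (a : Fin n → ℤ) (ha : ∀ i, |a i| ≤ H) :
    2 * |∑ i, a i * (2*(H:ℤ)+1)^(i:ℕ)| ≤ (2*(H:ℤ)+1)^n - 1 := by
  set B : ℤ := 2*(H:ℤ)+1 with hB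
  have hBpos : (0:ℤ) < B := by positivity
  have h1 : |∑ i, a i * B^(i:ℕ)| ≤ ∑ i : Fin n, (H:ℤ) * B^(i:ℕ) := by
    refine (Finset.abs_sum_le_sum_abs _ _).trans ?_
    apply Finset.sum_le_sum
    intro i _
    rw [abs_mul, abs_pow, abs_of_pos hBpos]
    exact mul_le_mul_of_nonneg_right (ha i) (by positivity)
  have h2 : 2 * ∑ i : Fin n, (H:ℤ) * B^(i:ℕ) = B^n - 1 := by
    rw [Finset.mul_sum]
    have : ∀ i : Fin n, 2 * ((H:ℤ) * B^(i:ℕ)) = (B - 1) * B^(i:ℕ) := by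
      intro i; rw [hB]; ring
    rw [Finset.sum_congr rfl (fun i _ => this i), ← Finset.mul_sum,
      Fin.sum_univ_eq_sum_range (fun i => B^i) n, mul_comm, geom_sum_mul]
  linarith

lemma count_div_bound (H n p : ℕ) (hp : 0 < p) :
    (((Fintype.piFinset (fun _ : Fin n => Finset.Icc (-(H:ℤ)) (H:ℤ))).filter
      (fun h => (p:ℤ) ∣ ∑ i : Fin n, h i * (2*(H:ℤ)+1)^(i.val))).card : ℝ)
      ≤ ((2*(H:ℝ)+1))^n / p + 1 := by
  obtain ⟨B, hB⟩ : ∃ B : ℤ, B = 2*(H:ℤ)+1 := ⟨_, rfl⟩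
  obtain ⟨K, hK⟩ : ∃ K : ℤ, K = B^n / (2*p) := ⟨_, rfl⟩
  rw [← hB]
  have hBpos : (0:ℤ) < B := by rw [hB]; positivity
  have hKnn : 0 ≤ K := hK ▸ Int.ediv_nonneg (by positivity) (by positivity)
  -- the quotient map is injective into Icc (-K) K
  have hcard : (((Fintype.piFinset (fun _ : Fin n => Finset.Icc (-(H:ℤ)) (H:ℤ))).filter
      (fun h => (p:ℤ) ∣ ∑ i : Fin n, h i * B^(i.val))).card)
      ≤ (Finset.Icc (-K) K).card := by
    apply Finset.card_le_card_of_injOn (fun h => (∑ i : Fin n, h i * B^(i.val)) / p)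
    · intro h hh
      simp only [Finset.coe_filter, Set.mem_setOf_eq, Finset.mem_coe, Finset.mem_filter, Fintype.mem_piFinset, Finset.mem_Icc] at hh ⊢
      obtain ⟨hbox, hdvd⟩ := hh
      obtain ⟨q, hq⟩ := hdvd
      have habs : 2 * |∑ i : Fin n, h i * B^(i.val)| ≤ B^n - 1 := by
        rw [hB]
        apply sum_abs_bound
        intro i
        rw [abs_le]; exact hbox i
      have hquot : (∑ i : Fin n, h i * B^(i.val)) / p = q := by
        rw [hq]; exact Int.mul_ediv_cancel_left q (by exact_mod_cast hp.ne')
      rw [hquot]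
      have hqabs : |q| * (2*p) ≤ B^n := by
        have : |(p:ℤ) * q| = p * |q| := by
          rw [abs_mul, abs_of_nonneg (by positivity : (0:ℤ) ≤ (p:ℤ))]
        nlinarith [habs, hq ▸ habs]
      have : |q| ≤ K := by
        rw [hK]
        exact Int.le_ediv_of_mul_le (by positivity) hqabs
      rw [abs_le] at this
      exact this
    · intro h hh h' hh' heq
      simp only [Finset.coe_filter, Set.mem_setOf_eq, Fintype.mem_piFinset,
        Finset.mem_Icc] at hh hh'
      obtain ⟨hbox, hdvd⟩ := hh
      obtain ⟨hbox', hdvd'⟩ := hh'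
      have hsums : (∑ i : Fin n, h i * B^(i.val)) = ∑ i : Fin n, h' i * B^(i.val) := by
        have e1 := Int.ediv_mul_cancel hdvd
        have e2 := Int.ediv_mul_cancel hdvd'
        have heq' : (∑ i : Fin n, h i * B^(i.val)) / p
            = (∑ i : Fin n, h' i * B^(i.val)) / p := heq
        rw [← e1, ← e2, heq']
      have hz : ∀ i, (h i - h' i) = 0 := by
        apply digit_zero H n (fun i => h i - h' i)
        · intro i
          show |h i - h' i| ≤ 2*(H:ℤ)
          rw [abs_le]
          constructor <;> linarith [(hbox i).1, (hbox i).2, (hbox' i).1, (hbox' i).2]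
        · have : (∑ i : Fin n, (h i - h' i) * B^(i.val))
              = (∑ i : Fin n, h i * B^(i.val)) - ∑ i : Fin n, h' i * B^(i.val) := by
            rw [← Finset.sum_sub_distrib]
            apply Finset.sum_congr rfl; intro i _; ring
          rw [← hB, this, hsums, sub_self]
      funext i
      have hzi := hz i
      linarith
  have hIcc : ((Finset.Icc (-K) K).card : ℝ) = 2*(K:ℝ) + 1 := by
    have h2 : (((Finset.Icc (-K) K).card : ℕ) : ℤ) = 2*K + 1 := by
      rw [Int.card_Icc, Int.toNat_of_nonneg (by linarith)]; ring
    exact_mod_cast h2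
  have hKreal : (K:ℝ) ≤ (2*(H:ℝ)+1)^n / (2*p) := by
    rw [le_div_iff₀ (by positivity)]
    have h1 : K * (2*(p:ℤ)) ≤ B^n := by
      have hmod := Int.emod_nonneg (B^n) (by positivity : (2*(p:ℤ)) ≠ 0)
      have hdiv := Int.emod_add_ediv_mul (B^n) (2*(p:ℤ))
      rw [hK]
      nlinarith [hmod, hdiv]
    calc (K:ℝ) * (2*p) = ((K * (2*(p:ℤ)) : ℤ) : ℝ) := by push_cast; ring
      _ ≤ ((B^n : ℤ) : ℝ) := by exact_mod_cast h1
      _ = (2*(H:ℝ)+1)^n := by rw [hB]; push_cast; ring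
  calc (((Fintype.piFinset (fun _ : Fin n => Finset.Icc (-(H:ℤ)) (H:ℤ))).filter
      (fun h => (p:ℤ) ∣ ∑ i : Fin n, h i * B^(i.val))).card : ℝ)
      ≤ ((Finset.Icc (-K) K).card : ℝ) := by exact_mod_cast hcard
    _ = 2*(K:ℝ)+1 := hIcc
    _ ≤ 2*((2*(H:ℝ)+1)^n / (2*p)) + 1 := by linarith
    _ = (2*(H:ℝ)+1)^n / p + 1 := by field_simp

set_option maxHeartbeats 2000000 in
/-- Let `d, e ≥ 1` and `ε > 0`. There exist `c > 0` and `H₀` such that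
for every `H ≥ H₀` and every prime `p` with `H^d < p ≤ H^(d+e−ε)`: taking
`αᵢ = (2H+1)^(i−1)` (`i = 1,…,d`) and `β_j = (2H+1)^(j−1)` (`j = 1,…,e`) in `F_p`, there
is a nonzero `λ₀ ∈ F_p` such that the number of integer tuples `(h, j)` with all
`|hᵢ| ≤ H`, `|j_k| ≤ H` and `(∑ αᵢhᵢ)·(∑ β_k j_k) = λ₀` in `F_p` is at least `c·H^ε`. -/
theorem stmt_14 (d e : ℕ) (hd : 1 ≤ d) (he : 1 ≤ e) (ε : ℝ) (hε : 0 < ε) :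
    ∃ c : ℝ, 0 < c ∧ ∃ H₀ : ℕ, ∀ H : ℕ, H₀ ≤ H →
      ∀ p : ℕ, p.Prime → H ^ d < p → (p : ℝ) ≤ (H : ℝ) ^ ((d + e : ℝ) - ε) →
        ∃ lam : ZMod p, lam ≠ 0 ∧
          c * (H : ℝ) ^ ε ≤
            (Set.ncard {hj : (Fin d → ℤ) × (Fin e → ℤ) |
              (∀ i, |hj.1 i| ≤ (H : ℤ)) ∧ (∀ k, |hj.2 k| ≤ (H : ℤ)) ∧
              (∑ i : Fin d, ((2 * H + 1 : ℕ) : ZMod p) ^ (i : ℕ) * (hj.1 i : ZMod p)) *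
                (∑ k : Fin e, ((2 * H + 1 : ℕ) : ZMod p) ^ (k : ℕ) * (hj.2 k : ZMod p)) =
                lam} : ℝ) := by
  refine ⟨1, one_pos, 12, ?_⟩
  intro H hH p hp hlow hup
  haveI : Fact p.Prime := ⟨hp⟩
  have hH12 : (12:ℕ) ≤ H := hH
  have hppos : 0 < p := hp.pos
  have hp13 : 13 ≤ p := by
    have h1 : 12 ≤ H^d := le_trans hH12 (Nat.le_self_pow (by omega) H)
    omega
  classical
  -- the two boxes
  have hIccCard : (Finset.Icc (-(H:ℤ)) (H:ℤ)).card = 2*H+1 := by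
    rw [Int.card_Icc]; omega
  -- key function
  set F : (Fin d → ℤ) → ZMod p :=
    fun h => ∑ i : Fin d, ((2*H+1 : ℕ) : ZMod p)^(i.val) * (h i : ZMod p) with hF
  set G : (Fin e → ℤ) → ZMod p :=
    fun h => ∑ k : Fin e, ((2*H+1 : ℕ) : ZMod p)^(k.val) * (h k : ZMod p) with hG
  set boxd : Finset (Fin d → ℤ) :=
    Fintype.piFinset (fun _ : Fin d => Finset.Icc (-(H:ℤ)) (H:ℤ)) with hboxd
  set boxe : Finset (Fin e → ℤ) :=
    Fintype.piFinset (fun _ : Fin e => Finset.Icc (-(H:ℤ)) (H:ℤ)) with hboxe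
  set T : ZMod p → Finset ((Fin d → ℤ) × (Fin e → ℤ)) :=
    fun lam => (boxd ×ˢ boxe).filter (fun hj => F hj.1 * G hj.2 = lam) with hT
  have hboxdcard : boxd.card = (2*H+1)^d := by
    rw [hboxd, Fintype.card_piFinset]
    simp [hIccCard]
  have hboxecard : boxe.card = (2*H+1)^e := by
    rw [hboxe, Fintype.card_piFinset]
    simp [hIccCard]
  -- fiberwise count
  have hfiber : ∑ lam : ZMod p, (T lam).card = (2*H+1)^(d+e) := by
    have h := Finset.card_eq_sum_card_fiberwise (s := boxd ×ˢ boxe)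
      (t := (Finset.univ : Finset (ZMod p)))
      (f := fun hj => F hj.1 * G hj.2) (fun x _ => Finset.mem_univ _)
    rw [Finset.card_product, hboxdcard, hboxecard, ← pow_add] at h
    exact h.symm
  -- cast identity for F
  have hcastF : ∀ (n : ℕ) (h : Fin n → ℤ),
      (∑ i : Fin n, ((2*H+1 : ℕ) : ZMod p)^(i.val) * (h i : ZMod p))
      = (((∑ i : Fin n, h i * (2*(H:ℤ)+1)^(i.val)) : ℤ) : ZMod p) := by
    intro n h
    push_cast
    apply Finset.sum_congr rfl
    intro i _
    ring
  have hF0 : ∀ h : Fin d → ℤ, (F h = 0 ↔ (p:ℤ) ∣ ∑ i : Fin d, h i * (2*(H:ℤ)+1)^(i.val)) := by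
    intro h
    rw [hF]
    simp only []
    rw [hcastF d h, ZMod.intCast_zmod_eq_zero_iff_dvd]
  have hG0 : ∀ h : Fin e → ℤ, (G h = 0 ↔ (p:ℤ) ∣ ∑ k : Fin e, h k * (2*(H:ℤ)+1)^(k.val)) := by
    intro h
    rw [hG]
    simp only []
    rw [hcastF e h, ZMod.intCast_zmod_eq_zero_iff_dvd]
  -- T 0 bound
  have hT0 : ((T 0).card : ℝ)
      ≤ ((2*(H:ℝ)+1)^d / p + 1) * (2*(H:ℝ)+1)^e + (2*(H:ℝ)+1)^d * ((2*(H:ℝ)+1)^e / p + 1) := by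
    have hsub : T 0 ⊆
        ((boxd.filter (fun h => (p:ℤ) ∣ ∑ i : Fin d, h i * (2*(H:ℤ)+1)^(i.val))) ×ˢ boxe)
        ∪ (boxd ×ˢ (boxe.filter (fun h => (p:ℤ) ∣ ∑ k : Fin e, h k * (2*(H:ℤ)+1)^(k.val)))) := by
      intro x hx
      rw [hT] at hx
      simp only [Finset.mem_filter, Finset.mem_product] at hx
      obtain ⟨⟨h1, h2⟩, h3⟩ := hx
      rcases mul_eq_zero.mp h3 with h4 | h4
      · apply Finset.mem_union_left
        rw [Finset.mem_product, Finset.mem_filter]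
        exact ⟨⟨h1, (hF0 x.1).mp h4⟩, h2⟩
      · apply Finset.mem_union_right
        rw [Finset.mem_product, Finset.mem_filter]
        exact ⟨h1, h2, (hG0 x.2).mp h4⟩
    have hcard1 := count_div_bound H d p hppos
    have hcard2 := count_div_bound H e p hppos
    have cardbound := (Finset.card_le_card hsub).trans (Finset.card_union_le _ _)
    rw [Finset.card_product, Finset.card_product, hboxdcard, hboxecard] at cardbound
    have hreal : ((T 0).card : ℝ) ≤
        ((boxd.filter (fun h => (p:ℤ) ∣ ∑ i : Fin d, h i * (2*(H:ℤ)+1)^(i.val))).card : ℝ)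
          * (2*(H:ℝ)+1)^e
        + (2*(H:ℝ)+1)^d *
          ((boxe.filter (fun h => (p:ℤ) ∣ ∑ k : Fin e, h k * (2*(H:ℤ)+1)^(k.val))).card : ℝ) := by
      exact_mod_cast cardbound
    refine hreal.trans ?_
    have hBe : (0:ℝ) ≤ (2*(H:ℝ)+1)^e := by positivity
    have hBd : (0:ℝ) ≤ (2*(H:ℝ)+1)^d := by positivity
    have c1 : ((boxd.filter (fun h => (p:ℤ) ∣ ∑ i : Fin d, h i * (2*(H:ℤ)+1)^(i.val))).card : ℝ)
        ≤ (2*(H:ℝ)+1)^d / p + 1 := by rw [hboxd]; exact hcard1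
    have c2 : ((boxe.filter (fun h => (p:ℤ) ∣ ∑ k : Fin e, h k * (2*(H:ℤ)+1)^(k.val))).card : ℝ)
        ≤ (2*(H:ℝ)+1)^e / p + 1 := by rw [hboxe]; exact hcard2
    have := mul_le_mul_of_nonneg_right c1 hBe
    have := mul_le_mul_of_nonneg_left c2 hBd
    linarith
  -- pigeonhole over nonzero residues
  have hne : ((Finset.univ : Finset (ZMod p)).erase 0).Nonempty := by
    refine ⟨1, Finset.mem_erase.mpr ⟨one_ne_zero, Finset.mem_univ _⟩⟩
  obtain ⟨lam, hlammem, hlammax⟩ :=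
    Finset.exists_max_image ((Finset.univ : Finset (ZMod p)).erase 0)
      (fun lam => (T lam).card) hne
  have hlamne : lam ≠ 0 := (Finset.mem_erase.mp hlammem).1
  refine ⟨lam, hlamne, ?_⟩
  -- main counting inequality in ℕ
  have hmain : (2*H+1)^(d+e) ≤ (T 0).card + p * (T lam).card := by
    have h1 : ∑ l ∈ (Finset.univ : Finset (ZMod p)).erase 0, (T l).card
        ≤ ((Finset.univ : Finset (ZMod p)).erase 0).card * (T lam).card := by
      calc ∑ l ∈ (Finset.univ : Finset (ZMod p)).erase 0, (T l).card
          ≤ ∑ _l ∈ (Finset.univ : Finset (ZMod p)).erase 0, (T lam).card :=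
            Finset.sum_le_sum (fun l hl => hlammax l hl)
        _ = _ := by rw [Finset.sum_const, smul_eq_mul]
    have h2 : ((Finset.univ : Finset (ZMod p)).erase 0).card ≤ p := by
      calc _ ≤ (Finset.univ : Finset (ZMod p)).card := Finset.card_erase_le
        _ = p := by rw [Finset.card_univ, ZMod.card]
    have h3 : (T 0).card + ∑ l ∈ (Finset.univ : Finset (ZMod p)).erase 0, (T l).card
        = (2*H+1)^(d+e) := by
      rw [← hfiber]
      exact Finset.add_sum_erase (Finset.univ : Finset (ZMod p))
        (fun l => (T l).card) (Finset.mem_univ 0)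
    calc (2*H+1)^(d+e) = (T 0).card + ∑ l ∈ (Finset.univ : Finset (ZMod p)).erase 0, (T l).card := h3.symm
      _ ≤ (T 0).card + ((Finset.univ : Finset (ZMod p)).erase 0).card * (T lam).card := by
          exact Nat.add_le_add_left h1 _
      _ ≤ (T 0).card + p * (T lam).card :=
          Nat.add_le_add_left (Nat.mul_le_mul_right _ h2) _
  -- identify the set with the finset
  have hsetT : {hj : (Fin d → ℤ) × (Fin e → ℤ) |
      (∀ i, |hj.1 i| ≤ (H : ℤ)) ∧ (∀ k, |hj.2 k| ≤ (H : ℤ)) ∧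
      (∑ i : Fin d, ((2 * H + 1 : ℕ) : ZMod p) ^ (i : ℕ) * (hj.1 i : ZMod p)) *
        (∑ k : Fin e, ((2 * H + 1 : ℕ) : ZMod p) ^ (k : ℕ) * (hj.2 k : ZMod p)) = lam}
      = ↑(T lam) := by
    ext x
    rw [hT]
    simp only [Set.mem_setOf_eq, Finset.coe_filter, Finset.mem_product, hboxd, hboxe,
      Fintype.mem_piFinset, Finset.mem_Icc, Set.mem_setOf_eq, hF, hG]
    constructor
    · rintro ⟨h1, h2, h3⟩
      refine ⟨⟨fun i => abs_le.mp (h1 i), fun k => abs_le.mp (h2 k)⟩, h3⟩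
    · rintro ⟨⟨h1, h2⟩, h3⟩
      exact ⟨fun i => abs_le.mpr (h1 i), fun k => abs_le.mpr (h2 k), h3⟩
  rw [hsetT, Set.ncard_coe_finset]
  -- final real arithmetic
  have hHr : (12:ℝ) ≤ (H:ℝ) := by exact_mod_cast hH12
  have hPr : (13:ℝ) ≤ (p:ℝ) := by exact_mod_cast hp13
  have hPpos : (0:ℝ) < (p:ℝ) := by linarith
  obtain ⟨R, hR⟩ : ∃ R : ℝ, ((T lam).card : ℝ) = R := ⟨_, rfl⟩
  obtain ⟨Z, hZ⟩ : ∃ Z : ℝ, ((T 0).card : ℝ) = Z := ⟨_, rfl⟩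
  obtain ⟨Bd, hBd'⟩ : ∃ x : ℝ, (2*(H:ℝ)+1)^d = x := ⟨_, rfl⟩
  obtain ⟨Be, hBe'⟩ : ∃ x : ℝ, (2*(H:ℝ)+1)^e = x := ⟨_, rfl⟩
  obtain ⟨X, hX'⟩ : ∃ x : ℝ, (2*(H:ℝ)+1)^(d+e) = x := ⟨_, rfl⟩
  obtain ⟨E, hE'⟩ : ∃ x : ℝ, (H:ℝ)^ε = x := ⟨_, rfl⟩
  rw [hR, hE']
  rw [hZ, hBd', hBe'] at hT0
  have hEpos : 0 < E := by
    rw [← hE']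
    exact Real.rpow_pos_of_pos (by linarith) _
  have f1 : Bd * Be = X := by rw [← hBd', ← hBe', ← hX', pow_add]
  have f2 : X ≤ Z + (p:ℝ) * R := by
    rw [← hX', ← hZ, ← hR]
    exact_mod_cast hmain
  have f3 : Z ≤ 2*X/(p:ℝ) + Bd + Be := by
    have expand : (Bd / p + 1) * Be + Bd * (Be / p + 1) = 2*(Bd*Be)/(p:ℝ) + Bd + Be := by
      field_simp; ring
    calc Z ≤ (Bd / p + 1) * Be + Bd * (Be / p + 1) := hT0
      _ = 2*(Bd*Be)/(p:ℝ) + Bd + Be := expand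
      _ = 2*X/(p:ℝ) + Bd + Be := by rw [f1]
  clear! F G boxd boxe T
  clear hT0 hlow hIccCard hcastF hne hlammem
  have f5d : (25:ℝ) ≤ Bd := by
    rw [← hBd']
    calc (25:ℝ) ≤ 2*(H:ℝ)+1 := by linarith
      _ ≤ (2*(H:ℝ)+1)^d := le_self_pow₀ (by linarith) (by omega)
  have f5e : (25:ℝ) ≤ Be := by
    rw [← hBe']
    calc (25:ℝ) ≤ 2*(H:ℝ)+1 := by linarith
      _ ≤ (2*(H:ℝ)+1)^e := le_self_pow₀ (by linarith) (by omega)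
  have hBdpos : (0:ℝ) < Bd := by linarith
  have hBepos : (0:ℝ) < Be := by linarith
  have hXpos : (0:ℝ) < X := by nlinarith
  have h9d : 25*Bd ≤ X := by nlinarith
  have h9e : 25*Be ≤ X := by nlinarith
  have h10 : 2*X/(p:ℝ) ≤ 2*X/13 := by
    rw [div_le_div_iff₀ hPpos (by norm_num)]
    nlinarith [hXpos.le, hPr]
  -- X is much bigger than p * E
  have f6 : 4 * ((p:ℝ) * E) ≤ X := by
    have hup2 : (p:ℝ) ≤ (H:ℝ)^((d:ℝ)+(e:ℝ)-ε) := hup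
    have hrw : (H:ℝ)^((d:ℝ)+(e:ℝ)-ε) = (H:ℝ)^((d:ℝ)+(e:ℝ)) / E := by
      rw [← hE', Real.rpow_sub (by linarith)]
    have hnat : (H:ℝ)^((d:ℝ)+(e:ℝ)) = (H:ℝ)^(d+e) := by
      rw [← Real.rpow_natCast (H:ℝ) (d+e)]
      push_cast
      ring_nf
    have hPE : (p:ℝ) * E ≤ (H:ℝ)^(d+e) := by
      have hmul := mul_le_mul_of_nonneg_right hup2 hEpos.le
      rw [hrw, div_mul_cancel₀, hnat] at hmul
      · exact hmul
      · exact hEpos.ne'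
    have hX4 : 4 * (H:ℝ)^(d+e) ≤ X := by
      rw [← hX']
      have h1 : (2*(H:ℝ))^(d+e) ≤ (2*(H:ℝ)+1)^(d+e) :=
        pow_le_pow_left₀ (by linarith) (by linarith) _
      have h2 : (2*(H:ℝ))^(d+e) = 2^(d+e) * (H:ℝ)^(d+e) := by rw [mul_pow]
      have h3 : (4:ℝ) ≤ 2^(d+e) := by
        calc (4:ℝ) = 2^2 := by norm_num
          _ ≤ 2^(d+e) := by
            apply pow_le_pow_right₀ (by norm_num)
            omega
      have hHpow : (0:ℝ) ≤ (H:ℝ)^(d+e) := by positivity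
      nlinarith
    linarith
  -- conclude
  have hfinal : (p:ℝ) * (2*E) ≤ (p:ℝ) * R := by
    have hbd : Bd ≤ X/25 := by linarith
    have hbe : Be ≤ X/25 := by linarith
    have hhalf : X/2 ≤ (p:ℝ) * R := by linarith
    linarith
  have hRE : 2*E ≤ R := le_of_mul_le_mul_left hfinal hPpos
  linarith
end
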